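/- The expected loss is monotone nonincreasing in the response coefficient: if 0 < γ₁ ≤ γ₂, then componentwise C^{(γ₂)}(t) ≤ C^{(γ₁)}(t) on [0,T] for solutions of the SCS model with the same initial condition in [0,1]^N (with C_i ≥ 0), and consequently L(x; G, α, β, δ, γ₂, T) ≤ L(x; G, α, β, δ, γ₁, T). -/

import Mathlib

open Set Filter Topology

/-- The right-hand side of the SCS model. -/
noncomputable def scsF {N : ℕ} (a : Fin N → Fin N → ℝ) (w x : Fin N → ℝ) (α β δ γ : ℝ)
    (C : Fin N → ℝ) : Fin N → ℝ :=
  fun i => (1 / (δ * w i)) * (α * x i + β * ∑ j, a j i * C j) * (1 - C i) - γ * w i * C i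


lemma freq_slope_sup_lt {ι : Type*} [Fintype ι] (hne : (Finset.univ : Finset ι).Nonempty)
    (g : ι → ℝ → ℝ) (d : ι → ℝ) (x r : ℝ)
    (hg : ∀ i, HasDerivAt (g i) (d i) x)
    (hr : ∀ i, g i x = Finset.univ.sup' hne (g · x) → d i < r) :
    ∃ᶠ z in 𝓝[>] x, (z - x)⁻¹ *
      (Finset.univ.sup' hne (g · z) - Finset.univ.sup' hne (g · x)) < r := by
  set F : ℝ → ℝ := fun t => Finset.univ.sup' hne (g · t) with hF
  have key : ∀ᶠ z in 𝓝[>] x, ∀ i, g i z < F x + r * (z - x) := by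
    rw [eventually_all]
    intro i
    rcases eq_or_lt_of_le (Finset.le_sup' (g · x) (Finset.mem_univ i)) with hei | hlt
    · -- argmax case
      have hd : d i < r := hr i hei
      have hslope : Tendsto (slope (g i) x) (𝓝[>] x) (𝓝 (d i)) := by
        have h1 : HasDerivWithinAt (g i) (d i) (Ioi x) x := (hg i).hasDerivWithinAt
        have h2 := hasDerivWithinAt_iff_tendsto_slope.1 h1
        have he : Ioi x \ {x} = Ioi x := by
          ext y; simp only [mem_diff, mem_Ioi, mem_singleton_iff]
          exact ⟨fun h => h.1, fun h => ⟨h, ne_of_gt h⟩⟩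
        rwa [he] at h2
      have hev := hslope.eventually_lt_const hd
      filter_upwards [hev, self_mem_nhdsWithin] with z hz hz'
      have hzx : 0 < z - x := sub_pos.2 hz'
      rw [slope_def_field, div_lt_iff₀ hzx] at hz
      have : g i x = F x := hei
      nlinarith
    · -- non-argmax case
      have hc : Tendsto (g i) (𝓝[>] x) (𝓝 (g i x)) :=
        ((hg i).continuousAt.tendsto).mono_left nhdsWithin_le_nhds
      have h1 : ∀ᶠ z in 𝓝[>] x, g i z < (g i x + F x) / 2 :=
        hc.eventually_lt_const (by linarith)
      have h2 : Tendsto (fun z => r * (z - x)) (𝓝[>] x) (𝓝 0) := by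
        have hcont : Continuous (fun z : ℝ => r * (z - x)) := by continuity
        have := (hcont.tendsto x).mono_left (nhdsWithin_le_nhds (s := Ioi x))
        simpa using this
      have h3 : ∀ᶠ z in 𝓝[>] x, (g i x - F x) / 2 < r * (z - x) :=
        h2.eventually_const_lt (by linarith)
      filter_upwards [h1, h3] with z hz1 hz3
      linarith
  apply Filter.Eventually.frequently
  filter_upwards [key, self_mem_nhdsWithin] with z hz hz'
  have hzx : 0 < z - x := sub_pos.2 hz'
  have hFz : F z < F x + r * (z - x) :=
    (Finset.sup'_lt_iff hne).2 fun i _ => hz i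
  have h4 : (z - x)⁻¹ * (F z - F x) < (z - x)⁻¹ * (r * (z - x)) := by
    apply mul_lt_mul_of_pos_left _ (inv_pos.2 hzx)
    linarith
  have h5 : (z - x)⁻¹ * (r * (z - x)) = r := by
    field_simp
  rw [h5] at h4
  exact h4

noncomputable def scsG {N : ℕ} (C1 C2 : ℝ → Fin N → ℝ) :
    Option (Fin N ⊕ Fin N ⊕ Fin N ⊕ Fin N ⊕ Fin N) → ℝ → ℝ
  | none => fun _ => 0
  | some (.inl i) => fun t => C1 t i - 1
  | some (.inr (.inl i)) => fun t => -C1 t i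
  | some (.inr (.inr (.inl i))) => fun t => C2 t i - 1
  | some (.inr (.inr (.inr (.inl i)))) => fun t => -C2 t i
  | some (.inr (.inr (.inr (.inr i)))) => fun t => C2 t i - C1 t i

noncomputable def scsD {N : ℕ} (a : Fin N → Fin N → ℝ) (w x : Fin N → ℝ)
    (α β δ γ₁ γ₂ : ℝ) (C1 C2 : ℝ → Fin N → ℝ) (t : ℝ) :
    Option (Fin N ⊕ Fin N ⊕ Fin N ⊕ Fin N ⊕ Fin N) → ℝ
  | none => 0
  | some (.inl i) => scsF a w x α β δ γ₁ (C1 t) i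
  | some (.inr (.inl i)) => -scsF a w x α β δ γ₁ (C1 t) i
  | some (.inr (.inr (.inl i))) => scsF a w x α β δ γ₂ (C2 t) i
  | some (.inr (.inr (.inr (.inl i)))) => -scsF a w x α β δ γ₂ (C2 t) i
  | some (.inr (.inr (.inr (.inr i)))) =>
      scsF a w x α β δ γ₂ (C2 t) i - scsF a w x α β δ γ₁ (C1 t) i

/-- Scalar inequality for the upper boundary component. -/
lemma scs_edge_hi (P K₁ γ wi v : ℝ) (hK₁ : 0 ≤ K₁) (hv0 : 0 ≤ v) (hv1 : v ≤ 1)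
    (hP : -(K₁ * v) ≤ P) (hγ : 0 < γ) (hwi : 0 < wi) :
    P * (1 - (1 + v)) - γ * wi * (1 + v) ≤ 8 * K₁ * v := by
  have h1 : 0 ≤ (P + K₁ * v) * v := mul_nonneg (by linarith) hv0
  have h2 : 0 ≤ K₁ * v * (1 - v) := mul_nonneg (mul_nonneg hK₁ hv0) (by linarith)
  have h3 : 0 ≤ γ * wi * (1 + v) :=
    mul_nonneg (mul_nonneg hγ.le hwi.le) (by linarith)
  have h4 : 0 ≤ K₁ * v := mul_nonneg hK₁ hv0
  nlinarith

/-- Scalar inequality for the lower boundary component. -/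
lemma scs_edge_lo (P K₁ γ wi v : ℝ) (hK₁ : 0 ≤ K₁) (hv0 : 0 ≤ v) (hv1 : v ≤ 1)
    (hP : -(K₁ * v) ≤ P) (hγ : 0 < γ) (hwi : 0 < wi) :
    -(P * (1 - -v) - γ * wi * -v) ≤ 8 * K₁ * v := by
  have h1 : 0 ≤ (P + K₁ * v) * (1 + v) := mul_nonneg (by linarith) (by linarith)
  have h2 : 0 ≤ K₁ * v * (1 - v) := mul_nonneg (mul_nonneg hK₁ hv0) (by linarith)
  have h3 : 0 ≤ γ * wi * v := mul_nonneg (mul_nonneg hγ.le hwi.le) hv0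
  have h4 : 0 ≤ K₁ * v := mul_nonneg hK₁ hv0
  nlinarith

/-- Scalar inequality for the comparison component. -/
lemma scs_comp (P1 P2 K₁ γ₁ γ₂ wi c1 c2 v : ℝ)
    (hK₁ : 0 ≤ K₁) (hv0 : 0 ≤ v) (hv1 : v ≤ 1)
    (hD_hi : P2 - P1 ≤ K₁ * v) (hD_lo : -(3 * K₁) ≤ P2 - P1)
    (hP1 : -(K₁ * v) ≤ P1)
    (hγ₁ : 0 < γ₁) (hγ : γ₁ ≤ γ₂) (hwi : 0 < wi)
    (hc : c2 - c1 = v) (hc1lo : -v ≤ c1) (hc2hi : c2 ≤ 1 + v) (hc2lo : -v ≤ c2) :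
    P2 * (1 - c2) - γ₂ * wi * c2 - (P1 * (1 - c1) - γ₁ * wi * c1) ≤ 8 * K₁ * v := by
  have hs_lo : -v ≤ 1 - c2 := by linarith
  have hs_hi : 1 - c2 ≤ 1 + v := by linarith
  have hprod : 0 ≤ (K₁ * v - (P2 - P1)) * ((1 - c2) + v) :=
    mul_nonneg (by linarith) (by linarith)
  have hKv : 0 ≤ K₁ * v := mul_nonneg hK₁ hv0
  have hKv_s : K₁ * v * (1 - c2) ≤ K₁ * v * (1 + v) :=
    mul_le_mul_of_nonneg_left hs_hi hKv
  have hKv2 : 0 ≤ K₁ * v * (1 - v) := mul_nonneg hKv (by linarith)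
  have hDv : (-(P2 - P1)) * v ≤ (3 * K₁) * v :=
    mul_le_mul_of_nonneg_right (by linarith) hv0
  have hDs : (P2 - P1) * (1 - c2) ≤ 6 * (K₁ * v) := by nlinarith
  have hP1v : (-P1) * v ≤ K₁ * v := by nlinarith
  have hg1 : 0 ≤ wi * ((γ₂ - γ₁) * (c1 + v)) :=
    mul_nonneg hwi.le (mul_nonneg (by linarith) (by linarith))
  have hg2 : 0 ≤ wi * (γ₁ * v) :=
    mul_nonneg hwi.le (mul_nonneg hγ₁.le hv0)
  have hgterm : γ₁ * wi * c1 - γ₂ * wi * c2 ≤ 0 := by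
    have hc2' : c2 = c1 + v := by linarith
    rw [hc2']
    nlinarith [hg1, hg2]
  have hrw : P2 * (1 - c2) - γ₂ * wi * c2 - (P1 * (1 - c1) - γ₁ * wi * c1)
      = (P2 - P1) * (1 - c2) + (-P1) * v + (γ₁ * wi * c1 - γ₂ * wi * c2) := by
    linear_combination (-P1) * hc
  rw [hrw]
  linarith

lemma scsD_bound {N : ℕ} (a : Fin N → Fin N → ℝ) (ha : ∀ i j, a i j = 0 ∨ a i j = 1)
    (w x : Fin N → ℝ) (α β δ γ₁ γ₂ W : ℝ)
    (hα : 0 < α) (hβ : 0 < β) (hδ : 0 < δ) (hγ₁ : 0 < γ₁) (hγ : γ₁ ≤ γ₂)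
    (hx : ∀ i, 0 ≤ x i) (hW : 0 < W) (hWw : ∀ i, W ≤ w i)
    (C1 C2 : ℝ → Fin N → ℝ) (t v : ℝ) (hv0 : 0 ≤ v) (hv1 : v ≤ 1)
    (hb : ∀ p, scsG C1 C2 p t ≤ v) :
    ∀ p, scsG C1 C2 p t = v →
      scsD a w x α β δ γ₁ γ₂ C1 C2 t p ≤ (8 * β * (N : ℝ) / (δ * W)) * v := by
  have hγ₂ : 0 < γ₂ := lt_of_lt_of_le hγ₁ hγ
  have hwpos : ∀ i, 0 < w i := fun i => lt_of_lt_of_le hW (hWw i)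
  have hδW : 0 < δ * W := mul_pos hδ hW
  set K₁ : ℝ := β * (N : ℝ) / (δ * W) with hK₁def
  have hK₁ : 0 ≤ K₁ :=
    div_nonneg (mul_nonneg hβ.le (Nat.cast_nonneg N)) hδW.le
  have hb1 : ∀ j, C1 t j ≤ 1 + v := fun j => by
    have := hb (some (.inl j)); simp only [scsG] at this; linarith
  have hb2 : ∀ j, -v ≤ C1 t j := fun j => by
    have := hb (some (.inr (.inl j))); simp only [scsG] at this; linarith
  have hb3 : ∀ j, C2 t j ≤ 1 + v := fun j => by
    have := hb (some (.inr (.inr (.inl j)))); simp only [scsG] at this; linarith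
  have hb4 : ∀ j, -v ≤ C2 t j := fun j => by
    have := hb (some (.inr (.inr (.inr (.inl j))))); simp only [scsG] at this; linarith
  have hb5 : ∀ j, C2 t j - C1 t j ≤ v := fun j => by
    have := hb (some (.inr (.inr (.inr (.inr j))))); simp only [scsG] at this; linarith
  -- sum bounds
  have hSlo : ∀ (C : Fin N → ℝ), (∀ j, -v ≤ C j) → ∀ i,
      -((N : ℝ) * v) ≤ ∑ j, a j i * C j := by
    intro C hC i
    have h : ∀ j ∈ Finset.univ, -v ≤ a j i * C j := by
      intro j _
      rcases ha j i with h | h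
      · rw [h, zero_mul]; linarith
      · rw [h, one_mul]; exact hC j
    calc -((N : ℝ) * v) = ∑ _j : Fin N, (-v) := by
          rw [Finset.sum_const, Finset.card_univ, Fintype.card_fin, nsmul_eq_mul]; ring
      _ ≤ ∑ j, a j i * C j := Finset.sum_le_sum h
  have hSdiff_hi : ∀ i, (∑ j, a j i * C2 t j) - ∑ j, a j i * C1 t j ≤ (N : ℝ) * v := by
    intro i
    rw [← Finset.sum_sub_distrib]
    have h : ∀ j ∈ Finset.univ, a j i * C2 t j - a j i * C1 t j ≤ v := by
      intro j _
      rcases ha j i with h | h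
      · rw [h, zero_mul, zero_mul]; linarith
      · rw [h, one_mul, one_mul]; exact hb5 j
    calc (∑ j, (a j i * C2 t j - a j i * C1 t j)) ≤ ∑ _j : Fin N, v :=
          Finset.sum_le_sum h
      _ = (N : ℝ) * v := by
          rw [Finset.sum_const, Finset.card_univ, Fintype.card_fin, nsmul_eq_mul]
  have hSdiff_lo : ∀ i, -((N : ℝ) * 3) ≤ (∑ j, a j i * C2 t j) - ∑ j, a j i * C1 t j := by
    intro i
    rw [← Finset.sum_sub_distrib]
    have h : ∀ j ∈ Finset.univ, -(3:ℝ) ≤ a j i * C2 t j - a j i * C1 t j := by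
      intro j _
      rcases ha j i with h | h
      · rw [h, zero_mul, zero_mul]; linarith
      · rw [h, one_mul, one_mul]; have := hb4 j; have := hb1 j; linarith
    calc -((N : ℝ) * 3) = ∑ _j : Fin N, (-(3:ℝ)) := by
          rw [Finset.sum_const, Finset.card_univ, Fintype.card_fin, nsmul_eq_mul]; ring
      _ ≤ _ := Finset.sum_le_sum h
  have hinv_pos : ∀ i, 0 < 1 / (δ * w i) := fun i => by
    rw [one_div_pos]; exact mul_pos hδ (hwpos i)
  have hinv_le : ∀ i, 1 / (δ * w i) ≤ 1 / (δ * W) := fun i =>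
    one_div_le_one_div_of_le hδW (mul_le_mul_of_nonneg_left (hWw i) hδ.le)
  have hβN : 0 ≤ β * (N : ℝ) := mul_nonneg hβ.le (Nat.cast_nonneg N)
  have hPlo : ∀ (C : Fin N → ℝ), (∀ j, -v ≤ C j) → ∀ i,
      -(K₁ * v) ≤ (1 / (δ * w i)) * (α * x i + β * ∑ j, a j i * C j) := by
    intro C hC i
    have h2 : β * (-((N:ℝ) * v)) ≤ β * ∑ j, a j i * C j :=
      mul_le_mul_of_nonneg_left (hSlo C hC i) hβ.le
    have h3 : 0 ≤ α * x i := mul_nonneg hα.le (hx i)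
    have h1 : -(β * ((N:ℝ) * v)) ≤ α * x i + β * ∑ j, a j i * C j := by nlinarith
    calc -(K₁ * v) = -(β * (N:ℝ) * v * (1 / (δ * W))) := by
          rw [hK₁def]; field_simp
      _ ≤ -(β * (N:ℝ) * v * (1 / (δ * w i))) := by
          apply neg_le_neg
          exact mul_le_mul_of_nonneg_left (hinv_le i) (mul_nonneg hβN hv0)
      _ = (1 / (δ * w i)) * (-(β * ((N:ℝ) * v))) := by ring
      _ ≤ _ := mul_le_mul_of_nonneg_left h1 (hinv_pos i).le
  have hPdiff_hi : ∀ i,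
      (1 / (δ * w i)) * (α * x i + β * ∑ j, a j i * C2 t j)
        - (1 / (δ * w i)) * (α * x i + β * ∑ j, a j i * C1 t j) ≤ K₁ * v := by
    intro i
    have h1 : (1 / (δ * w i)) * (α * x i + β * ∑ j, a j i * C2 t j)
        - (1 / (δ * w i)) * (α * x i + β * ∑ j, a j i * C1 t j)
        = (1 / (δ * w i)) * (β * ((∑ j, a j i * C2 t j) - ∑ j, a j i * C1 t j)) := by
      ring
    rw [h1]
    have h2 : β * ((∑ j, a j i * C2 t j) - ∑ j, a j i * C1 t j) ≤ β * ((N:ℝ) * v) :=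
      mul_le_mul_of_nonneg_left (hSdiff_hi i) hβ.le
    calc (1 / (δ * w i)) * (β * ((∑ j, a j i * C2 t j) - ∑ j, a j i * C1 t j))
        ≤ (1 / (δ * w i)) * (β * ((N:ℝ) * v)) :=
          mul_le_mul_of_nonneg_left h2 (hinv_pos i).le
      _ ≤ (1 / (δ * W)) * (β * ((N:ℝ) * v)) :=
          mul_le_mul_of_nonneg_right (hinv_le i)
            (mul_nonneg hβ.le (mul_nonneg (Nat.cast_nonneg N) hv0))
      _ = K₁ * v := by rw [hK₁def]; field_simp
  have hPdiff_lo : ∀ i, -(3 * K₁) ≤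
      (1 / (δ * w i)) * (α * x i + β * ∑ j, a j i * C2 t j)
        - (1 / (δ * w i)) * (α * x i + β * ∑ j, a j i * C1 t j) := by
    intro i
    have h1 : (1 / (δ * w i)) * (α * x i + β * ∑ j, a j i * C2 t j)
        - (1 / (δ * w i)) * (α * x i + β * ∑ j, a j i * C1 t j)
        = (1 / (δ * w i)) * (β * ((∑ j, a j i * C2 t j) - ∑ j, a j i * C1 t j)) := by
      ring
    rw [h1]
    have h2 : β * (-((N:ℝ) * 3)) ≤ β * ((∑ j, a j i * C2 t j) - ∑ j, a j i * C1 t j) :=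
      mul_le_mul_of_nonneg_left (hSdiff_lo i) hβ.le
    calc -(3 * K₁) = -(β * (N:ℝ) * 3 * (1 / (δ * W))) := by
          rw [hK₁def]; field_simp
      _ ≤ -(β * (N:ℝ) * 3 * (1 / (δ * w i))) := by
          apply neg_le_neg
          exact mul_le_mul_of_nonneg_left (hinv_le i)
            (mul_nonneg hβN (by norm_num))
      _ = (1 / (δ * w i)) * (β * (-((N:ℝ) * 3))) := by ring
      _ ≤ _ := mul_le_mul_of_nonneg_left h2 (hinv_pos i).le
  have hKeq : 8 * β * (N : ℝ) / (δ * W) * v = 8 * K₁ * v := by rw [hK₁def]; ring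
  rintro (_ | (i | i | i | i | i)) hp
  · simp only [scsG] at hp
    simp only [scsD]
    rw [hKeq, ← hp]
    nlinarith
  · simp only [scsG] at hp
    have hc : C1 t i = 1 + v := by linarith
    simp only [scsD, scsF]
    rw [hKeq, hc]
    exact scs_edge_hi _ _ _ _ _ hK₁ hv0 hv1 (hPlo (C1 t) hb2 i) hγ₁ (hwpos i)
  · simp only [scsG] at hp
    have hc : C1 t i = -v := by linarith
    simp only [scsD, scsF]
    rw [hKeq, hc]
    exact scs_edge_lo _ _ _ _ _ hK₁ hv0 hv1 (hPlo (C1 t) hb2 i) hγ₁ (hwpos i)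
  · simp only [scsG] at hp
    have hc : C2 t i = 1 + v := by linarith
    simp only [scsD, scsF]
    rw [hKeq, hc]
    exact scs_edge_hi _ _ _ _ _ hK₁ hv0 hv1 (hPlo (C2 t) hb4 i) hγ₂ (hwpos i)
  · simp only [scsG] at hp
    have hc : C2 t i = -v := by linarith
    simp only [scsD, scsF]
    rw [hKeq, hc]
    exact scs_edge_lo _ _ _ _ _ hK₁ hv0 hv1 (hPlo (C2 t) hb4 i) hγ₂ (hwpos i)
  · simp only [scsG] at hp
    simp only [scsD, scsF]
    rw [hKeq]
    exact scs_comp _ _ _ _ _ _ _ _ _ hK₁ hv0 hv1 (hPdiff_hi i) (hPdiff_lo i)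
      (hPlo (C1 t) hb2 i) hγ₁ hγ (hwpos i) hp (hb2 i) (hb3 i) (hb4 i)

lemma scsG_hasDerivAt {N : ℕ} (a : Fin N → Fin N → ℝ) (w x : Fin N → ℝ)
    (α β δ γ₁ γ₂ : ℝ) (C1 C2 : ℝ → Fin N → ℝ) (t : ℝ)
    (h1 : HasDerivAt C1 (scsF a w x α β δ γ₁ (C1 t)) t)
    (h2 : HasDerivAt C2 (scsF a w x α β δ γ₂ (C2 t)) t) :
    ∀ p, HasDerivAt (scsG C1 C2 p) (scsD a w x α β δ γ₁ γ₂ C1 C2 t p) t := by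
  have h1' := hasDerivAt_pi.1 h1
  have h2' := hasDerivAt_pi.1 h2
  rintro (_ | (i | i | i | i | i))
  · simpa [scsG, scsD] using hasDerivAt_const t (0 : ℝ)
  · simpa [scsG, scsD] using (h1' i).sub_const 1
  · simpa [scsG, scsD] using (h1' i).fun_neg
  · simpa [scsG, scsD] using (h2' i).sub_const 1
  · simpa [scsG, scsD] using (h2' i).fun_neg
  · simpa [scsG, scsD] using (h2' i).fun_sub (h1' i)

/-- The expected loss is monotone nonincreasing in the response coefficient:
if 0 < γ₁ ≤ γ₂ then componentwise C^{(γ₂)} ≤ C^{(γ₁)} on [0,T], and consequently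
L(x; G, α, β, δ, γ₂, T) ≤ L(x; G, α, β, δ, γ₁, T). -/
theorem loss_antitone_in_response_coeff {N : ℕ} (a : Fin N → Fin N → ℝ)
    (ha : ∀ i j, a i j = 0 ∨ a i j = 1)
    (w x : Fin N → ℝ) (α β δ γ₁ γ₂ T : ℝ)
    (hα : 0 < α) (hβ : 0 < β) (hδ : 0 < δ) (hγ₁ : 0 < γ₁) (hγ : γ₁ ≤ γ₂)
    (hx : ∀ i, 0 ≤ x i) (hw : ∀ i, 0 < w i) (hT : 0 < T)
    (C1 C2 : ℝ → Fin N → ℝ)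
    (hC1 : ∀ t ∈ Set.Icc (0 : ℝ) T, HasDerivAt C1 (scsF a w x α β δ γ₁ (C1 t)) t)
    (hC2 : ∀ t ∈ Set.Icc (0 : ℝ) T, HasDerivAt C2 (scsF a w x α β δ γ₂ (C2 t)) t)
    (h0 : C1 0 = C2 0) (h0box : ∀ i, C1 0 i ∈ Set.Icc (0 : ℝ) 1) :
    (∀ t ∈ Set.Icc (0 : ℝ) T, ∀ i, C2 t i ≤ C1 t i) ∧
    (∫ t in (0:ℝ)..T, ∑ i, w i * C2 t i) ≤ ∫ t in (0:ℝ)..T, ∑ i, w i * C1 t i := by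
  classical
  rcases Nat.eq_zero_or_pos N with hN | hN
  · subst hN
    refine ⟨fun t ht i => i.elim0, ?_⟩
    simp
  haveI : Nonempty (Fin N) := ⟨⟨0, hN⟩⟩
  -- the sup of the auxiliary family
  have hne : (Finset.univ : Finset (Option (Fin N ⊕ Fin N ⊕ Fin N ⊕ Fin N ⊕ Fin N))).Nonempty :=
    ⟨none, Finset.mem_univ _⟩
  set F : ℝ → ℝ := fun t => Finset.univ.sup' hne (fun p => scsG C1 C2 p t) with hFdef
  have hle : ∀ t p, scsG C1 C2 p t ≤ F t :=
    fun t p => Finset.le_sup' (fun q => scsG C1 C2 q t) (Finset.mem_univ p)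
  have hF0 : ∀ t, 0 ≤ F t := fun t => by
    have := hle t none
    simpa [scsG] using this
  have hDeriv : ∀ t ∈ Set.Icc (0:ℝ) T, ∀ p,
      HasDerivAt (scsG C1 C2 p) (scsD a w x α β δ γ₁ γ₂ C1 C2 t p) t :=
    fun t ht => scsG_hasDerivAt a w x α β δ γ₁ γ₂ C1 C2 t (hC1 t ht) (hC2 t ht)
  have hFcont : ∀ t ∈ Set.Icc (0:ℝ) T, ContinuousAt F t := by
    intro t ht
    exact Filter.Tendsto.finset_sup'_nhds_apply hne
      (fun p _ => ((hDeriv t ht p).continuousAt))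
  have hFzero0 : F 0 ≤ 0 := by
    apply Finset.sup'_le
    rintro (_ | (i | i | i | i | i)) _ <;> simp only [scsG]
    · exact le_refl 0
    · have := (h0box i).2; linarith
    · have := (h0box i).1; linarith
    · rw [← h0]; have := (h0box i).2; linarith
    · rw [← h0]; have := (h0box i).1; linarith
    · rw [← h0]; simp
  -- weights
  set W : ℝ := Finset.univ.inf' Finset.univ_nonempty w with hWdef
  have hW : 0 < W := by
    rw [hWdef, Finset.lt_inf'_iff]
    exact fun i _ => hw i
  have hWw : ∀ i, W ≤ w i := fun i => Finset.inf'_le w (Finset.mem_univ i)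
  set Kc : ℝ := 8 * β * (N : ℝ) / (δ * W) with hKcdef
  -- the localization set
  set A : Set ℝ := {t | t ∈ Set.Icc (0:ℝ) T ∧ ∀ s ∈ Set.Icc (0:ℝ) t, F s ≤ 1} with hAdef
  have hA0 : (0:ℝ) ∈ A := by
    refine ⟨⟨le_refl 0, hT.le⟩, fun s hs => ?_⟩
    have hs0 : s = 0 := le_antisymm hs.2 hs.1
    rw [hs0]; linarith
  have hAbdd : BddAbove A := ⟨T, fun t ht => ht.1.2⟩
  set t₀ : ℝ := sSup A with ht₀def
  have h0t : 0 ≤ t₀ := le_csSup hAbdd hA0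
  have htT : t₀ ≤ T := csSup_le ⟨0, hA0⟩ (fun t ht => ht.1.2)
  have hFlt : ∀ s, 0 ≤ s → s < t₀ → F s ≤ 1 := by
    intro s h1 h2
    obtain ⟨u, huA, hsu⟩ := exists_lt_of_lt_csSup ⟨0, hA0⟩ h2
    exact huA.2 s ⟨h1, hsu.le⟩
  have hF1 : ∀ s ∈ Set.Icc (0:ℝ) t₀, F s ≤ 1 := by
    intro s hs
    rcases lt_or_eq_of_le hs.2 with h | h
    · exact hFlt s hs.1 h
    · rcases eq_or_lt_of_le h0t with h0' | h0'
      · rw [h, ← h0']; linarith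
      · have hcont : ContinuousWithinAt F (Set.Iio t₀) t₀ :=
          (hFcont t₀ ⟨h0t, htT⟩).continuousWithinAt
        have hlt : ∀ᶠ z in nhdsWithin t₀ (Set.Iio t₀), F z ≤ 1 := by
          filter_upwards [Ioo_mem_nhdsLT_of_mem (⟨h0', le_refl t₀⟩ : t₀ ∈ Set.Ioc 0 t₀)]
            with z hz
          exact hFlt z hz.1.le hz.2
        have := le_of_tendsto hcont hlt
        rw [h]; exact this
  -- Grönwall on [0, t₀]
  have hgron : ∀ s ∈ Set.Icc (0:ℝ) t₀, F s ≤ 0 := by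
    have hcont : ContinuousOn F (Set.Icc 0 t₀) :=
      fun s hs => (hFcont s ⟨hs.1, le_trans hs.2 htT⟩).continuousWithinAt
    have hslope : ∀ s ∈ Set.Ico (0:ℝ) t₀, ∀ r, Kc * F s < r →
        ∃ᶠ z in nhdsWithin s (Set.Ioi s), (z - s)⁻¹ * (F z - F s) < r := by
      intro s hs r hr
      have hsT : s ∈ Set.Icc (0:ℝ) T := ⟨hs.1, le_trans hs.2.le htT⟩
      refine freq_slope_sup_lt hne (fun p => scsG C1 C2 p)
        (scsD a w x α β δ γ₁ γ₂ C1 C2 s) s r (hDeriv s hsT) ?_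
      intro p hp
      refine lt_of_le_of_lt (scsD_bound a ha w x α β δ γ₁ γ₂ W hα hβ hδ hγ₁ hγ hx hW hWw
        C1 C2 s (F s) (hF0 s) (hF1 s ⟨hs.1, hs.2.le⟩) (hle s) p hp) ?_
      exact hr
    have h := le_gronwallBound_of_liminf_deriv_right_le (f := F) (f' := fun s => Kc * F s)
      (δ := 0) (K := Kc) (ε := 0) (a := 0) (b := t₀) hcont hslope hFzero0
      (fun s _ => le_of_eq (add_zero _).symm)
    intro s hs
    have h2 := h s hs
    rwa [gronwallBound_ε0_δ0] at h2
  -- t₀ = T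
  have hteq : t₀ = T := by
    by_contra hne'
    have hlt : t₀ < T := lt_of_le_of_ne htT hne'
    have hcont : ContinuousAt F t₀ := hFcont t₀ ⟨h0t, htT⟩
    have hFt₀ : F t₀ ≤ 0 := hgron t₀ ⟨h0t, le_refl _⟩
    have hev : ∀ᶠ z in nhds t₀, F z < 1 :=
      hcont.eventually_lt_const (by linarith : F t₀ < 1)
    obtain ⟨η, hη, hball⟩ := Metric.eventually_nhds_iff.1 hev
    have ht₁A : min T (t₀ + η/2) ∈ A := by
      constructor
      · exact ⟨le_min hT.le (by linarith), min_le_left _ _⟩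
      · intro s hs
        rcases le_or_gt s t₀ with h | h
        · exact hF1 s ⟨hs.1, h⟩
        · apply le_of_lt
          apply hball
          have hs2 : s ≤ t₀ + η/2 := le_trans hs.2 (min_le_right _ _)
          rw [Real.dist_eq, abs_lt]
          constructor <;> linarith
    have h1 : min T (t₀ + η/2) ≤ t₀ := le_csSup hAbdd ht₁A
    have h2 : t₀ < min T (t₀ + η/2) := lt_min hlt (by linarith)
    linarith
  have hcomp : ∀ t ∈ Set.Icc (0:ℝ) T, ∀ i, C2 t i ≤ C1 t i := by
    intro t ht i
    have h1 : C2 t i - C1 t i ≤ F t := by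
      have := hle t (some (.inr (.inr (.inr (.inr i)))))
      simpa [scsG] using this
    have h2 : F t ≤ 0 := hgron t ⟨ht.1, hteq ▸ ht.2⟩
    linarith
  refine ⟨hcomp, ?_⟩
  have hcont1 : ContinuousOn (fun t => ∑ i, w i * C1 t i) (Set.Icc 0 T) := by
    apply continuousOn_finset_sum
    intro i _
    exact continuousOn_const.mul
      (fun s hs => ((hasDerivAt_pi.1 (hC1 s hs) i).continuousAt).continuousWithinAt)
  have hcont2 : ContinuousOn (fun t => ∑ i, w i * C2 t i) (Set.Icc 0 T) := by
    apply continuousOn_finset_sum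
    intro i _
    exact continuousOn_const.mul
      (fun s hs => ((hasDerivAt_pi.1 (hC2 s hs) i).continuousAt).continuousWithinAt)
  have hi1 : IntervalIntegrable (fun t => ∑ i, w i * C1 t i) MeasureTheory.volume 0 T :=
    ((Set.uIcc_of_le hT.le).symm ▸ hcont1).intervalIntegrable
  have hi2 : IntervalIntegrable (fun t => ∑ i, w i * C2 t i) MeasureTheory.volume 0 T :=
    ((Set.uIcc_of_le hT.le).symm ▸ hcont2).intervalIntegrable
  apply intervalIntegral.integral_mono_on hT.le hi2 hi1
  intro s hs
  exact Finset.sum_le_sum fun i _ =>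
    mul_le_mul_of_nonneg_left (hcomp s hs i) (hw i).le
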